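/- Let E be a metric space with a Borel measure 𝔪 satisfying 𝔪(B_r(x)) ≤ C r^ν for all x ∈ E and 0 < r ≤ 2, for some constants C, ν > 0. Let α, γ > 0 and q ≥ 1 with α < γq. If a measurable function f : E → ℝ satisfies sup_{x∈E} ∫_{d(x,y)≤1} |f(y)|^q / d(x,y)^{ν-α} d𝔪(y) < ∞, then sup_{x∈E} ∫_{d(x,y)≤1} |f(y)| / d(x,y)^{ν-γ} d𝔪(y) < ∞. -/

import Mathlib

open MeasureTheory Metric Set

lemma sing_null {E : Type*} [MetricSpace E] [MeasurableSpace E] [BorelSpace E]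
    (m : Measure E) (C ν : ℝ) (hν : 0 < ν)
    (hvol : ∀ (x : E) (r : ℝ), 0 < r → r ≤ 2 → m (ball x r) ≤ ENNReal.ofReal (C * r ^ ν))
    (x : E) : m {x} = 0 := by
  have hb : ∀ n : ℕ, m {x} ≤ ENNReal.ofReal (C * ((1:ℝ)/(n+1)) ^ ν) := by
    intro n
    have hr : (0:ℝ) < 1/(n+1) := by positivity
    refine le_trans (measure_mono ?_) (hvol x _ hr ?_)
    · intro y hy
      simp only [mem_singleton_iff] at hy
      subst hy
      simpa [mem_ball] using hr
    · have : (1:ℝ)/(n+1) ≤ 1 := by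
        rw [div_le_one (by positivity)]
        linarith [Nat.cast_nonneg (α := ℝ) n]
      linarith
  have htend : Filter.Tendsto (fun n : ℕ => ENNReal.ofReal (C * ((1:ℝ)/(n+1)) ^ ν))
      Filter.atTop (nhds 0) := by
    have h1 : Filter.Tendsto (fun n : ℕ => (1:ℝ)/(n+1)) Filter.atTop (nhds 0) :=
      tendsto_one_div_add_atTop_nhds_zero_nat
    have h2 : ContinuousAt (fun r : ℝ => ENNReal.ofReal (C * r ^ ν)) 0 := by
      apply ENNReal.continuous_ofReal.continuousAt.comp
      exact (continuousAt_const.mul (Real.continuousAt_rpow_const 0 ν (Or.inr hν.le)))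
    have := h2.tendsto.comp h1
    simpa [Function.comp_def, Real.zero_rpow (ne_of_gt hν)] using this
  have : m {x} ≤ 0 := ge_of_tendsto' htend hb
  exact le_antisymm this zero_le


lemma kernel_bound {E : Type*} [MetricSpace E] [MeasurableSpace E] [BorelSpace E]
    (m : Measure E) (C ν a : ℝ) (hC : 0 < C) (hν : 0 < ν) (ha : 0 < a)
    (hvol : ∀ (x : E) (r : ℝ), 0 < r → r ≤ 2 → m (ball x r) ≤ ENNReal.ofReal (C * r ^ ν))
    (x : E) :
    ∫⁻ y in {y | dist x y ≤ 1}, ENNReal.ofReal (dist x y ^ (a - ν)) ∂m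
      ≤ ENNReal.ofReal (C * 4 ^ ν) * (1 - ENNReal.ofReal ((2:ℝ) ^ (-a)))⁻¹ := by
  set A : ℕ → Set E := fun k => {y | dist x y ∈ Ioc ((1/2:ℝ)^(k+1)) ((1/2:ℝ)^k)} with hA
  have hsub : {y | dist x y ≤ 1} ⊆ {x} ∪ ⋃ k, A k := by
    intro y hy
    simp only [mem_setOf_eq] at hy
    rcases eq_or_lt_of_le (dist_nonneg (x := x) (y := y)) with hd | hd
    · left
      simp [Set.mem_singleton_iff, eq_comm, ← dist_eq_zero (x := x) (y := y), hd.symm]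
    · right
      have hex : ∃ n : ℕ, (1/2:ℝ)^n < dist x y :=
        exists_pow_lt_of_lt_one hd (by norm_num)
      classical
      set N := Nat.find hex with hN
      have hNspec : (1/2:ℝ)^N < dist x y := Nat.find_spec hex
      have hN1 : 1 ≤ N := by
        by_contra h
        push_neg at h
        interval_cases N
        · simp at hNspec; linarith
      refine mem_iUnion.2 ⟨N - 1, ?_⟩
      have hkN : N - 1 + 1 = N := Nat.succ_pred_eq_of_pos hN1
      constructor
      · rw [hkN]; exact hNspec
      · have := Nat.find_min hex (m := N - 1) (by omega)
        push_neg at this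
        exact this
  calc ∫⁻ y in {y | dist x y ≤ 1}, ENNReal.ofReal (dist x y ^ (a - ν)) ∂m
      ≤ ∫⁻ y in {x} ∪ ⋃ k, A k, ENNReal.ofReal (dist x y ^ (a - ν)) ∂m :=
        lintegral_mono_set hsub
    _ ≤ (∫⁻ y in {x}, ENNReal.ofReal (dist x y ^ (a - ν)) ∂m)
        + ∫⁻ y in ⋃ k, A k, ENNReal.ofReal (dist x y ^ (a - ν)) ∂m := lintegral_union_le _ _ _
    _ = ∫⁻ y in ⋃ k, A k, ENNReal.ofReal (dist x y ^ (a - ν)) ∂m := by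
        rw [setLIntegral_measure_zero _ _ (sing_null m C ν hν hvol x), zero_add]
    _ ≤ ∑' k : ℕ, ∫⁻ y in A k, ENNReal.ofReal (dist x y ^ (a - ν)) ∂m :=
        lintegral_iUnion_le _ _
    _ ≤ ∑' k : ℕ, ENNReal.ofReal (C * 4 ^ ν) * (ENNReal.ofReal ((2:ℝ) ^ (-a)))^k := by
        refine ENNReal.tsum_le_tsum fun k => ?_
        set hk : ℝ := (1/2:ℝ)^k with hhk
        have hkpos : 0 < hk := by positivity
        have hkle1 : hk ≤ 1 := by
          rw [hhk]
          exact pow_le_one₀ (by norm_num) (by norm_num)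
        -- pointwise bound on A k
        have hpt : ∀ y ∈ A k, ENNReal.ofReal (dist x y ^ (a - ν))
            ≤ ENNReal.ofReal ((2:ℝ) ^ ν * hk ^ (a - ν)) := by
          intro y hy
          obtain ⟨hy1, hy2⟩ := hy
          have hd0 : 0 < dist x y := lt_trans (by positivity) hy1
          apply ENNReal.ofReal_le_ofReal
          have e1 : dist x y ^ (a - ν) = dist x y ^ a * dist x y ^ (-ν) := by
            rw [← Real.rpow_add hd0]; ring_nf
          have e2 : hk ^ (a - ν) = hk ^ a * hk ^ (-ν) := by
            rw [← Real.rpow_add hkpos]; ring_nf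
          rw [e1, e2]
          have h3 : dist x y ^ a ≤ hk ^ a := Real.rpow_le_rpow dist_nonneg hy2 ha.le
          have h4 : dist x y ^ (-ν) ≤ (hk/2) ^ (-ν) := by
            apply Real.rpow_le_rpow_of_nonpos (by positivity) ?_ (by linarith)
            calc hk/2 = (1/2:ℝ)^(k+1) := by rw [hhk]; ring
              _ ≤ dist x y := hy1.le
          have h5 : (hk/2:ℝ) ^ (-ν) = 2 ^ ν * hk ^ (-ν) := by
            rw [div_eq_mul_inv, Real.mul_rpow hkpos.le (by norm_num),
              Real.inv_rpow (by norm_num), ← Real.rpow_neg (by norm_num), neg_neg]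
            ring
          calc dist x y ^ a * dist x y ^ (-ν) ≤ hk ^ a * ((hk/2) ^ (-ν)) := by
                apply mul_le_mul h3 h4 (Real.rpow_nonneg dist_nonneg _)
                  (Real.rpow_nonneg hkpos.le _)
            _ = 2 ^ ν * (hk ^ a * hk ^ (-ν)) := by rw [h5]; ring
        have hmeas : m (A k) ≤ ENNReal.ofReal (C * 2 ^ ν * hk ^ ν) := by
          have hAsub : A k ⊆ ball x (2 * hk) := by
            intro y hy
            obtain ⟨_, hy2⟩ := hy
            rw [mem_ball, dist_comm]
            calc dist x y ≤ hk := hy2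
              _ < 2 * hk := by linarith
          refine le_trans (measure_mono hAsub) (le_trans (hvol x _ (by linarith) (by linarith)) ?_)
          apply ENNReal.ofReal_le_ofReal
          rw [Real.mul_rpow (by norm_num) hkpos.le, mul_assoc]
        calc ∫⁻ y in A k, ENNReal.ofReal (dist x y ^ (a - ν)) ∂m
            ≤ ∫⁻ _ in A k, ENNReal.ofReal ((2:ℝ) ^ ν * hk ^ (a - ν)) ∂m :=
              setLIntegral_mono measurable_const hpt
          _ = ENNReal.ofReal ((2:ℝ) ^ ν * hk ^ (a - ν)) * m (A k) := setLIntegral_const _ _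
          _ ≤ ENNReal.ofReal ((2:ℝ) ^ ν * hk ^ (a - ν)) * ENNReal.ofReal (C * 2 ^ ν * hk ^ ν) :=
              mul_le_mul_right hmeas _
          _ = ENNReal.ofReal ((2:ℝ) ^ ν * hk ^ (a - ν) * (C * 2 ^ ν * hk ^ ν)) := by
              rw [← ENNReal.ofReal_mul (by positivity)]
          _ = ENNReal.ofReal (C * 4 ^ ν) * (ENNReal.ofReal ((2:ℝ) ^ (-a)))^k := by
              rw [← ENNReal.ofReal_pow (by positivity),
                ← ENNReal.ofReal_mul (by positivity)]
              congr 1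
              have e6 : (2:ℝ)^ν * 2^ν = 4^ν := by
                rw [← Real.mul_rpow (by norm_num) (by norm_num)]; norm_num
              have e7 : hk ^ (a - ν) * hk ^ ν = hk ^ a := by
                rw [← Real.rpow_add hkpos]; ring_nf
              have e8 : ((2:ℝ) ^ (-a)) ^ k = hk ^ a := by
                rw [hhk, ← Real.rpow_natCast ((2:ℝ)^(-a)) k, ← Real.rpow_natCast ((1:ℝ)/2) k,
                  ← Real.rpow_mul (by norm_num), one_div, ← Real.rpow_neg_one (2:ℝ),
                  ← Real.rpow_mul (by norm_num), ← Real.rpow_mul (by norm_num)]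
                ring_nf
              calc (2:ℝ) ^ ν * hk ^ (a - ν) * (C * 2 ^ ν * hk ^ ν)
                  = C * (2^ν * 2^ν) * (hk ^ (a-ν) * hk ^ ν) := by ring
                _ = C * 4 ^ ν * ((2:ℝ) ^ (-a)) ^ k := by rw [e6, e7, e8]
    _ = ENNReal.ofReal (C * 4 ^ ν) * (1 - ENNReal.ofReal ((2:ℝ) ^ (-a)))⁻¹ := by
        rw [ENNReal.tsum_mul_left, ENNReal.tsum_geometric]


theorem stmt3 {E : Type*} [MetricSpace E] [MeasurableSpace E] [BorelSpace E]
    (m : Measure E) (C ν α γ q : ℝ) (hC : 0 < C) (hν : 0 < ν)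
    (hvol : ∀ (x : E) (r : ℝ), 0 < r → r ≤ 2 → m (ball x r) ≤ ENNReal.ofReal (C * r ^ ν))
    (hα : 0 < α) (hγ : 0 < γ) (hq : 1 ≤ q) (hαγq : α < γ * q)
    (f : E → ℝ) (hf : Measurable f)
    (hM : (⨆ x : E, ∫⁻ y in {y | dist x y ≤ 1},
      ENNReal.ofReal (|f y| ^ q / (dist x y) ^ (ν - α)) ∂m) < ⊤) :
    (⨆ x : E, ∫⁻ y in {y | dist x y ≤ 1},
      ENNReal.ofReal (|f y| / (dist x y) ^ (ν - γ)) ∂m) < ⊤ := by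
  have hsing := sing_null m C ν hν hvol
  have hSmeas : ∀ x : E, MeasurableSet {y | dist x y ≤ 1} := fun x =>
    (isClosed_le (continuous_const.dist continuous_id) continuous_const).measurableSet
  have hne : ∀ x : E, ∀ᵐ y ∂(m.restrict {y | dist x y ≤ 1}), y ≠ x := by
    intro x
    rw [ae_iff]
    have h1 : {y : E | ¬ y ≠ x} = {x} := by ext y; simp
    rw [h1]
    exact le_antisymm (le_trans (Measure.restrict_le_self _) (hsing x).le) zero_le
  rcases eq_or_lt_of_le hq with hq1 | hq1
  · -- q = 1
    subst hq1
    refine lt_of_le_of_lt (iSup_mono fun x => ?_) hM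
    refine lintegral_mono_ae ?_
    filter_upwards [hne x, ae_restrict_mem (hSmeas x)] with y hy0 hy1
    have hd : 0 < dist x y := by
      rcases eq_or_lt_of_le (dist_nonneg (x := x) (y := y)) with h | h
      · exact absurd (dist_eq_zero.1 h.symm).symm hy0
      · exact h
    apply ENNReal.ofReal_le_ofReal
    rw [Real.rpow_one]
    apply div_le_div_of_nonneg_left (abs_nonneg _) (Real.rpow_pos_of_pos hd _)
    exact Real.rpow_le_rpow_of_exponent_ge hd hy1 (by linarith)
  · -- q > 1
    set q' : ℝ := Real.conjExponent q with hq'def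
    have hpq : q.HolderConjugate q' := Real.HolderConjugate.conjExponent hq1
    have hq0 : (0:ℝ) < q := by linarith
    have hq'0 : (0:ℝ) < q' := hpq.symm.pos
    set a : ℝ := (γ * q - α) / (q - 1) with hadef
    have ha : 0 < a := div_pos (by linarith) (by linarith)
    set c : ℝ := (ν - α) / q with hcdef
    set M := ⨆ x : E, ∫⁻ y in {y | dist x y ≤ 1},
      ENNReal.ofReal (|f y| ^ q / (dist x y) ^ (ν - α)) ∂m with hMdef
    set K := ENNReal.ofReal (C * 4 ^ ν) * (1 - ENNReal.ofReal ((2:ℝ) ^ (-a)))⁻¹ with hKdef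
    have hKtop : K ≠ ⊤ := by
      apply ENNReal.mul_ne_top ENNReal.ofReal_ne_top
      refine ENNReal.inv_ne_top.2 ?_
      have : ENNReal.ofReal ((2:ℝ) ^ (-a)) < 1 :=
        ENNReal.ofReal_lt_one.2 (Real.rpow_lt_one_of_one_lt_of_neg one_lt_two (by linarith))
      exact (tsub_pos_of_lt this).ne'
    refine lt_of_le_of_lt (iSup_le fun x => ?_)
      (ENNReal.mul_lt_top (ENNReal.rpow_lt_top_of_nonneg (y := 1/q) (by positivity) hM.ne)
        (ENNReal.rpow_lt_top_of_nonneg (y := 1/q') (by positivity) hKtop))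
    set F : E → ENNReal := fun y => ENNReal.ofReal (|f y| / dist x y ^ c) with hFdef
    set G : E → ENNReal := fun y => ENNReal.ofReal (dist x y ^ (c - (ν - γ))) with hGdef
    have hdist : Measurable fun y : E => dist x y :=
      (continuous_const.dist continuous_id).measurable
    have hFmeas : Measurable F :=
      ENNReal.measurable_ofReal.comp (hf.abs.div (hdist.pow measurable_const))
    have hGmeas : Measurable G :=
      ENNReal.measurable_ofReal.comp (hdist.pow measurable_const)
    have step1 : ∫⁻ y in {y | dist x y ≤ 1}, ENNReal.ofReal (|f y| / (dist x y) ^ (ν - γ)) ∂m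
        ≤ ∫⁻ y in {y | dist x y ≤ 1}, (F * G) y ∂m := by
      refine lintegral_mono_ae ?_
      filter_upwards [hne x] with y hy0
      have hd : 0 < dist x y := by
        rcases eq_or_lt_of_le (dist_nonneg (x := x) (y := y)) with h | h
        · exact absurd (dist_eq_zero.1 h.symm).symm hy0
        · exact h
      have key : |f y| / dist x y ^ (ν - γ) = |f y| / dist x y ^ c * dist x y ^ (c - (ν - γ)) := by
        rw [div_mul_eq_mul_div, div_eq_div_iff (Real.rpow_pos_of_pos hd _).ne'
          (Real.rpow_pos_of_pos hd _).ne', mul_assoc, ← Real.rpow_add hd]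
        congr 1
        rw [show c - (ν - γ) + (ν - γ) = c by ring]
      show ENNReal.ofReal (|f y| / dist x y ^ (ν - γ))
        ≤ ENNReal.ofReal (|f y| / dist x y ^ c) * ENNReal.ofReal (dist x y ^ (c - (ν - γ)))
      rw [← ENNReal.ofReal_mul (by positivity), key]
    have holder := ENNReal.lintegral_mul_le_Lp_mul_Lq (m.restrict {y | dist x y ≤ 1}) hpq
      hFmeas.aemeasurable hGmeas.aemeasurable
    have step3 : ∫⁻ y in {y | dist x y ≤ 1}, F y ^ q ∂m ≤ M := by
      refine le_trans (lintegral_mono_ae ?_) (hMdef ▸ le_iSup (fun z : E =>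
        ∫⁻ y in {y | dist z y ≤ 1}, ENNReal.ofReal (|f y| ^ q / dist z y ^ (ν - α)) ∂m) x)
      filter_upwards [hne x] with y hy0
      have hd : 0 < dist x y := by
        rcases eq_or_lt_of_le (dist_nonneg (x := x) (y := y)) with h | h
        · exact absurd (dist_eq_zero.1 h.symm).symm hy0
        · exact h
      show ENNReal.ofReal (|f y| / dist x y ^ c) ^ q
        ≤ ENNReal.ofReal (|f y| ^ q / dist x y ^ (ν - α))
      rw [ENNReal.ofReal_rpow_of_nonneg (by positivity) hq0.le]
      apply ENNReal.ofReal_le_ofReal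
      rw [Real.div_rpow (abs_nonneg _) (Real.rpow_nonneg dist_nonneg _),
        ← Real.rpow_mul dist_nonneg, hcdef, div_mul_cancel₀ _ hq0.ne']
    have step4 : ∫⁻ y in {y | dist x y ≤ 1}, G y ^ q' ∂m ≤ K := by
      have heq : ∀ y : E, G y ^ q' = ENNReal.ofReal (dist x y ^ (a - ν)) := by
        intro y
        show ENNReal.ofReal (dist x y ^ (c - (ν - γ))) ^ q'
          = ENNReal.ofReal (dist x y ^ (a - ν))
        rw [ENNReal.ofReal_rpow_of_nonneg (Real.rpow_nonneg dist_nonneg _) hq'0.le,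
          ← Real.rpow_mul dist_nonneg]
        congr 2
        rw [hcdef, hadef, hq'def, Real.conjExponent]
        have h1 : q ≠ 0 := hq0.ne'
        have h2 : q - 1 ≠ 0 := ne_of_gt (by linarith)
        field_simp
        ring
      calc ∫⁻ y in {y | dist x y ≤ 1}, G y ^ q' ∂m
          = ∫⁻ y in {y | dist x y ≤ 1}, ENNReal.ofReal (dist x y ^ (a - ν)) ∂m := by
            exact lintegral_congr fun y => heq y
        _ ≤ K := kernel_bound m C ν a hC hν ha hvol x
    calc ∫⁻ y in {y | dist x y ≤ 1}, ENNReal.ofReal (|f y| / (dist x y) ^ (ν - γ)) ∂m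
        ≤ ∫⁻ y in {y | dist x y ≤ 1}, (F * G) y ∂m := step1
      _ ≤ (∫⁻ y in {y | dist x y ≤ 1}, F y ^ q ∂m) ^ (1/q)
          * (∫⁻ y in {y | dist x y ≤ 1}, G y ^ q' ∂m) ^ (1/q') := holder
      _ ≤ M ^ (1/q) * K ^ (1/q') :=
          mul_le_mul' (ENNReal.rpow_le_rpow step3 (by positivity))
            (ENNReal.rpow_le_rpow step4 (by positivity))
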